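/- For generalized Zipf weights with 0 < α < 1, i.e., w_i = i^{−α}/H_n^{(α)} with H_n^{(α)} = ∑_{i=1}^n i^{−α}, the quantity E[T] = H_n^{(α)} ∑_{r=2}^n 1/H_r^{(α)} satisfies E[T] = n/α + o(n) as n → ∞. -/

import Mathlib

open Filter Finset Real Topology

lemma antitone_rpow (q : ℝ) (hq1 : q < 0) (c : ℝ) :
    AntitoneOn (fun x : ℝ => x ^ q) (Set.Icc 1 c) := by
  intro x hx y hy hxy
  exact Real.rpow_le_rpow_of_nonpos (lt_of_lt_of_le zero_lt_one hx.1) hxy hq1.le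

lemma lemA_lower {q : ℝ} (hq0 : -1 < q) (hq1 : q < 0) (n : ℕ) (hn : 1 ≤ n) :
    (((n : ℝ) + 1) ^ (q + 1) - 1) / (q + 1) ≤ ∑ i ∈ Icc 1 n, (i : ℝ) ^ q := by
  have hab : 1 ≤ n + 1 := by omega
  have h := AntitoneOn.integral_le_sum_Ico (f := fun x : ℝ => x ^ q) hab
    (by exact_mod_cast antitone_rpow q hq1 (n + 1))
  rw [integral_rpow (Or.inl hq0)] at h
  rw [← Finset.Ico_add_one_right_eq_Icc]
  calc (((n : ℝ) + 1) ^ (q + 1) - 1) / (q + 1)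
      = (((n : ℕ) + 1 : ℕ) : ℝ) ^ (q + 1) / (q+1) - (1:ℝ) ^ (q + 1) / (q+1) := by
        push_cast; rw [Real.one_rpow]; ring
    _ ≤ ∑ i ∈ Ico 1 (n+1), (i : ℝ) ^ q := by
        convert h using 1; push_cast; rw [Real.one_rpow]; ring

lemma sum_Icc_decomp (a : ℕ → ℝ) (n : ℕ) (hn : 1 ≤ n) :
    ∑ i ∈ Icc 1 n, a i = a 1 + ∑ i ∈ Ico 1 n, a (i + 1) := by
  rw [← Finset.Ico_add_one_right_eq_Icc, Finset.sum_eq_sum_Ico_succ_bot (by omega),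
    Finset.sum_Ico_add' a 1 n 1]

lemma lemA_upper {q : ℝ} (hq0 : -1 < q) (hq1 : q < 0) (n : ℕ) (hn : 1 ≤ n) :
    ∑ i ∈ Icc 1 n, (i : ℝ) ^ q ≤ 1 + ((n : ℝ) ^ (q + 1) - 1) / (q + 1) := by
  have h := AntitoneOn.sum_le_integral_Ico (f := fun x : ℝ => x ^ q) hn
    (by exact_mod_cast antitone_rpow q hq1 n)
  rw [integral_rpow (Or.inl hq0)] at h
  rw [sum_Icc_decomp (fun i => (i : ℝ) ^ q) n hn]
  have h1 : ((1 : ℕ) : ℝ) ^ q = 1 := by norm_num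
  rw [h1]
  gcongr
  calc ∑ i ∈ Ico 1 n, ((i + 1 : ℕ) : ℝ) ^ q
      ≤ ((n:ℝ) ^ (q+1) - (1:ℝ) ^ (q+1)) / (q+1) := by exact_mod_cast h
    _ = ((n:ℝ) ^ (q+1) - 1) / (q+1) := by rw [Real.one_rpow]

lemma lemA {q : ℝ} (hq0 : -1 < q) (hq1 : q < 0) :
    Tendsto (fun n : ℕ => (∑ i ∈ Icc 1 n, (i : ℝ) ^ q) / (n : ℝ) ^ (q + 1))
      atTop (𝓝 (1 / (q + 1))) := by
  set p := q + 1 with hp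
  have hp0 : 0 < p := by linarith
  set G := fun n : ℕ => ∑ i ∈ Icc 1 n, (i : ℝ) ^ q with hG
  have hnp : Tendsto (fun n : ℕ => (n : ℝ) ^ p) atTop atTop :=
    (tendsto_rpow_atTop hp0).comp tendsto_natCast_atTop_atTop
  have hbound : ∀ n : ℕ, 1 ≤ n → |G n - (n : ℝ) ^ p / p| ≤ 1 + 1 / p := by
    intro n hn
    rw [abs_le]
    constructor
    · have h1 := lemA_lower hq0 hq1 n hn
      have h2 : ((n : ℝ)) ^ p ≤ ((n : ℝ) + 1) ^ p :=
        Real.rpow_le_rpow (Nat.cast_nonneg n) (by linarith) hp0.le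
      have : ((n:ℝ)^p - 1)/p ≤ G n := le_trans (by gcongr) h1
      rw [sub_div] at this
      have h3 : 0 < 1/p := by positivity
      linarith
    · have h1 := lemA_upper hq0 hq1 n hn
      rw [sub_div] at h1
      have h3 : 0 < 1/p := by positivity
      linarith
  have key : Tendsto (fun n : ℕ => (G n - (n : ℝ) ^ p / p) / (n : ℝ) ^ p) atTop (𝓝 0) := by
    refine squeeze_zero_norm' (a := fun n : ℕ => (1 + 1/p) / (n : ℝ) ^ p) ?_
      (tendsto_const_nhds.div_atTop hnp)
    filter_upwards [eventually_ge_atTop 1] with n hn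
    have hpos : (0:ℝ) < (n : ℝ) ^ p := by
      apply Real.rpow_pos_of_pos; exact_mod_cast Nat.pos_of_ne_zero (by omega)
    rw [norm_div, Real.norm_of_nonneg hpos.le]
    gcongr
    simpa using hbound n hn
  have : Tendsto (fun n : ℕ => 1/p + (G n - (n : ℝ) ^ p / p) / (n : ℝ) ^ p) atTop (𝓝 (1/p)) := by
    simpa using tendsto_const_nhds.add key
  apply this.congr'
  filter_upwards [eventually_ge_atTop 1] with n hn
  have hpos : (0:ℝ) < (n : ℝ) ^ p := by
    apply Real.rpow_pos_of_pos; exact_mod_cast Nat.pos_of_ne_zero (by omega)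
  simp only [hG]
  field_simp
  ring

lemma sum_range_succ_eq_sum_Icc (b : ℕ → ℝ) (n : ℕ) :
    ∑ i ∈ Finset.range (n + 1), (if i = 0 then 0 else b i) = ∑ i ∈ Icc 1 n, b i := by
  rw [Finset.range_eq_Ico, Finset.sum_eq_sum_Ico_succ_bot (Nat.succ_pos n)]
  rw [if_pos rfl, zero_add, ← Finset.Ico_add_one_right_eq_Icc]
  apply Finset.sum_congr rfl
  intro i hi
  rw [if_neg (by have := (Finset.mem_Ico.mp hi).1; omega)]

lemma lemB {a : ℕ → ℝ} {q c : ℝ} (hq0 : -1 < q) (hq1 : q < 0)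
    (h : Tendsto (fun r : ℕ => a r / (r : ℝ) ^ q) atTop (𝓝 c)) :
    Tendsto (fun n : ℕ => (∑ i ∈ Icc 1 n, a i) / (n : ℝ) ^ (q + 1))
      atTop (𝓝 (c / (q + 1))) := by
  set p := q + 1 with hpdef
  have hp0 : 0 < p := by linarith
  set g : ℕ → ℝ := fun i => (i : ℝ) ^ q with hgdef
  set G := fun n : ℕ => ∑ i ∈ Icc 1 n, g i with hGdef
  set f : ℕ → ℝ := fun i => (if i = 0 then 0 else a i) - c * g i with hfdef
  set T := fun n : ℕ => ∑ i ∈ Finset.range n, g i with hTdef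
  have hg0 : g 0 = 0 := by simp [hgdef, Real.zero_rpow hq1.ne]
  have hTG : ∀ n : ℕ, T (n + 1) = G n := by
    intro n
    show ∑ i ∈ Finset.range (n+1), g i = ∑ i ∈ Icc 1 n, g i
    rw [← sum_range_succ_eq_sum_Icc g n]
    apply Finset.sum_congr rfl
    intro i _
    split_ifs with hi
    · rw [hi, hg0]
    · rfl
  have hGpos : ∀ n : ℕ, 1 ≤ n → 1 ≤ G n := by
    intro n hn
    rw [hGdef]
    have : g 1 = 1 := by simp [hgdef]
    calc (1:ℝ) = g 1 := this.symm
      _ ≤ ∑ i ∈ Icc 1 n, g i := Finset.single_le_sum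
          (fun i _ => Real.rpow_nonneg (Nat.cast_nonneg i) q)
          (Finset.mem_Icc.mpr ⟨le_refl 1, hn⟩)
  have hnp : Tendsto (fun n : ℕ => (n : ℝ) ^ p) atTop atTop :=
    (tendsto_rpow_atTop hp0).comp tendsto_natCast_atTop_atTop
  have hGlim : Tendsto (fun n : ℕ => G n / (n : ℝ) ^ p) atTop (𝓝 (1 / p)) := lemA hq0 hq1
  have hGtop : Tendsto G atTop atTop := by
    have := Filter.Tendsto.pos_mul_atTop (by positivity : (0:ℝ) < 1/p) hGlim hnp
    apply this.congr'
    filter_upwards [eventually_ge_atTop 1] with n hn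
    have hpos : (0:ℝ) < (n : ℝ) ^ p := by
      apply Real.rpow_pos_of_pos; exact_mod_cast Nat.pos_of_ne_zero (by omega)
    field_simp
  have hTtop : Tendsto T atTop atTop := by
    rw [← tendsto_add_atTop_iff_nat 1]
    exact hGtop.congr (fun n => (hTG n).symm)
  have hfg : f =o[atTop] g := by
    rw [Asymptotics.isLittleO_iff_tendsto']
    · rw [show (0:ℝ) = c - c by ring]
      apply (h.sub_const c).congr'
      filter_upwards [eventually_ge_atTop 1] with n hn
      have hgpos : (0:ℝ) < g n := by
        apply Real.rpow_pos_of_pos; exact_mod_cast Nat.pos_of_ne_zero (by omega)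
      rw [hfdef]
      simp only [if_neg (by omega : n ≠ 0)]
      field_simp
      simp only [hgdef]
      ring
    · filter_upwards [eventually_ge_atTop 1] with n hn hgn
      exfalso
      have hgpos : (0:ℝ) < g n := by
        apply Real.rpow_pos_of_pos; exact_mod_cast Nat.pos_of_ne_zero (by omega)
      exact hgpos.ne' hgn
  have little := hfg.sum_range (fun i => Real.rpow_nonneg (Nat.cast_nonneg i) q) hTtop
  have hdiv : Tendsto (fun n : ℕ => (∑ i ∈ Finset.range n, f i) / T n) atTop (𝓝 0) :=
    little.tendsto_div_nhds_zero
  have hdiv' : Tendsto (fun n : ℕ => (∑ i ∈ Finset.range (n+1), f i) / T (n+1)) atTop (𝓝 0) :=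
    hdiv.comp (tendsto_add_atTop_nat 1)
  have main : Tendsto (fun n : ℕ =>
      ((∑ i ∈ Finset.range (n+1), f i) / T (n+1)) * (G n / (n : ℝ) ^ p)
        + c * (G n / (n : ℝ) ^ p)) atTop (𝓝 (0 * (1/p) + c * (1/p))) :=
    (hdiv'.mul hGlim).add (hGlim.const_mul c)
  have : (0:ℝ) * (1/p) + c * (1/p) = c / p := by ring
  rw [this] at main
  apply main.congr'
  filter_upwards [eventually_ge_atTop 1] with n hn
  have hpos : (0:ℝ) < (n : ℝ) ^ p := by
    apply Real.rpow_pos_of_pos; exact_mod_cast Nat.pos_of_ne_zero (by omega)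
  have hGn : (0:ℝ) < G n := lt_of_lt_of_le zero_lt_one (hGpos n hn)
  have hsum : ∑ i ∈ Icc 1 n, a i = (∑ i ∈ Finset.range (n+1), f i) + c * T (n+1) := by
    rw [← sum_range_succ_eq_sum_Icc a n, hTdef, hfdef, Finset.mul_sum,
      ← Finset.sum_add_distrib]
    apply Finset.sum_congr rfl
    intro i _
    ring
  rw [hTG] at hsum ⊢
  rw [hsum]
  field_simp

/-- For generalized Zipf weights with `0 < α < 1`, `E[T] = H_n^{(α)} ∑_{r=2}^n 1/H_r^{(α)}`
satisfies `E[T] = n/α + o(n)`, i.e. `E[T]/n → 1/α`. -/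
theorem gzl_alpha_lt_one_expected_T (α : ℝ) (hα0 : 0 < α) (hα1 : α < 1) :
    Filter.Tendsto
      (fun n : ℕ =>
        ((∑ i ∈ Finset.Icc 1 n, (i : ℝ) ^ (-α)) *
          ∑ r ∈ Finset.Icc 2 n, 1 / (∑ i ∈ Finset.Icc 1 r, (i : ℝ) ^ (-α))) / n)
      Filter.atTop (nhds (1 / α)) := by
  set H : ℕ → ℝ := fun n => ∑ i ∈ Icc 1 n, (i : ℝ) ^ (-α) with hHdef
  have hHpos : ∀ n : ℕ, 1 ≤ n → 0 < H n := by
    intro n hn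
    rw [hHdef]
    have h1 : ((1:ℕ) : ℝ) ^ (-α) = 1 := by norm_num
    calc (0:ℝ) < 1 := zero_lt_one
      _ = ((1:ℕ):ℝ) ^ (-α) := h1.symm
      _ ≤ ∑ i ∈ Icc 1 n, (i : ℝ) ^ (-α) := Finset.single_le_sum
          (fun i _ => Real.rpow_nonneg (Nat.cast_nonneg i) (-α))
          (Finset.mem_Icc.mpr ⟨le_refl 1, hn⟩)
  -- first factor
  have hH : Tendsto (fun n : ℕ => H n / (n : ℝ) ^ (1 - α)) atTop (𝓝 (1 / (1 - α))) := by
    have := lemA (q := -α) (by linarith) (by linarith)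
    have e : -α + 1 = 1 - α := by ring
    rw [e] at this
    exact this
  -- term asymptotics for 1/H
  have hinv : Tendsto (fun r : ℕ => (1 / H r) / (r : ℝ) ^ (α - 1)) atTop (𝓝 (1 - α)) := by
    have h1 : Tendsto (fun n : ℕ => (H n / (n : ℝ) ^ (1 - α))⁻¹) atTop (𝓝 (1 / (1 - α))⁻¹) :=
      hH.inv₀ (by
        have h1α : (0:ℝ) < 1 - α := by linarith
        positivity)
    have e : ((1:ℝ) / (1 - α))⁻¹ = 1 - α := by
      field_simp
    rw [e] at h1
    apply h1.congr'
    filter_upwards [eventually_ge_atTop 1] with n hn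
    have hnpos : (0:ℝ) < (n:ℝ) := by exact_mod_cast Nat.pos_of_ne_zero (by omega)
    rw [inv_div]
    rw [show (α - 1) = -(1-α) by ring, Real.rpow_neg hnpos.le]
    field_simp
  -- sum asymptotics for ∑ 1/H over Icc 1 n
  have hA : Tendsto (fun n : ℕ => (∑ r ∈ Icc 1 n, 1 / H r) / (n : ℝ) ^ α)
      atTop (𝓝 ((1 - α) / α)) := by
    have := lemB (a := fun r => 1 / H r) (q := α - 1) (c := 1 - α)
      (by linarith) (by linarith) hinv
    have e : α - 1 + 1 = α := by ring
    rw [e] at this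
    exact this
  -- 1/n^α → 0
  have hzero : Tendsto (fun n : ℕ => 1 / (n : ℝ) ^ α) atTop (𝓝 0) :=
    tendsto_const_nhds.div_atTop ((tendsto_rpow_atTop hα0).comp tendsto_natCast_atTop_atTop)
  -- second factor
  have hS : Tendsto (fun n : ℕ => (∑ r ∈ Icc 2 n, 1 / H r) / (n : ℝ) ^ α)
      atTop (𝓝 ((1 - α) / α)) := by
    have := hA.sub hzero
    rw [sub_zero] at this
    apply this.congr'
    filter_upwards [eventually_ge_atTop 1] with n hn
    have hsplit : ∑ r ∈ Icc 1 n, 1 / H r = 1 / H 1 + ∑ r ∈ Icc 2 n, 1 / H r := by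
      rw [← Finset.Ico_add_one_right_eq_Icc, Finset.sum_eq_sum_Ico_succ_bot (by omega), Finset.Ico_add_one_right_eq_Icc]
    have hH1 : H 1 = 1 := by
      rw [hHdef]
      simp
    rw [hsplit, hH1]
    rw [div_sub_div_same]
    norm_num
  -- combine
  have main := hH.mul hS
  have e : (1 / (1 - α)) * ((1 - α) / α) = 1 / α := by
    field_simp
    rw [div_self (by linarith : (1 - α) ≠ 0)]
  rw [e] at main
  apply main.congr'
  filter_upwards [eventually_ge_atTop 1] with n hn
  have hnpos : (0:ℝ) < (n:ℝ) := by exact_mod_cast Nat.pos_of_ne_zero (by omega)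
  have hsplitpow : (n : ℝ) ^ (1 - α) * (n : ℝ) ^ α = (n : ℝ) := by
    rw [← Real.rpow_add hnpos]
    norm_num
  have h1 : (0:ℝ) < (n:ℝ) ^ (1 - α) := Real.rpow_pos_of_pos hnpos _
  have h2 : (0:ℝ) < (n:ℝ) ^ α := Real.rpow_pos_of_pos hnpos _
  rw [div_mul_div_comm, hsplitpow]
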